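/- arXiv:2211.05911 — 6 statements merged into one kernel-verified Lean document; each statement's English description precedes it below -/
import Mathlib

section
/- Let n ≥ 1 and let B be a linear subspace of 𝔽₂ⁿ. Define 𝓘 = {(S,T) ∈ 𝔽₂ⁿ × 𝔽₂ⁿ : S ∉ B and ⟨γ,T⟩ = 0 for all γ ∈ B + span{S}}. Suppose X ⊆ 𝓘 satisfies |X| ≥ 2ⁿ − |B| and ⟨S₁,T₂⟩ + ⟨S₂,T₁⟩ = 0 for all (S₁,T₁),(S₂,T₂) ∈ X. Then there exists a function f : 𝔽₂ⁿ \ B → B^⊤ such that ⟨S, f(T)⟩ = ⟨T, f(S)⟩ and ⟨S, f(S)⟩ = 0 for all S, T ∈ 𝔽₂ⁿ \ B, and X = {(S, f(S)) : S ∈ 𝔽₂ⁿ \ B}. -/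
open Module

namespace Stmt0Aux

/-- The standard bilinear form on `𝔽₂ⁿ`. -/
noncomputable def bil (n : ℕ) : LinearMap.BilinForm (ZMod 2) (Fin n → ZMod 2) :=
  LinearMap.mk₂ (ZMod 2) (fun x y => ∑ i, x i * y i)
    (fun x x' y => by simp [add_mul, Finset.sum_add_distrib])
    (fun c x y => by simp [Finset.mul_sum, mul_assoc])
    (fun x y y' => by simp [mul_add, Finset.sum_add_distrib])
    (fun c x y => by simp [Finset.mul_sum, mul_assoc, mul_left_comm])

lemma bil_apply (n : ℕ) (x y : Fin n → ZMod 2) : bil n x y = ∑ i, x i * y i := rfl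

lemma bil_symm (n : ℕ) (x y : Fin n → ZMod 2) : bil n x y = bil n y x := by
  simp only [bil_apply]
  exact Finset.sum_congr rfl fun i _ => mul_comm _ _

lemma bil_refl (n : ℕ) : (bil n).IsRefl := fun x y h => by
  rw [bil_symm]; exact h

lemma bil_nondegenerate (n : ℕ) : (bil n).Nondegenerate := by
  refine (LinearMap.IsRefl.nondegenerate_iff_separatingLeft (bil_refl n)).mpr ?_
  intro x hx
  funext i
  have h := hx (Pi.single i 1)
  simp only [bil_apply, Pi.single_apply, mul_ite, mul_one, mul_zero] at h
  rw [Finset.sum_ite_eq' Finset.univ i (fun j => x j)] at h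
  simpa using h

lemma char2 : ∀ a b : ZMod 2, a + b = 0 → a = b := by decide

lemma char2' : ∀ a : ZMod 2, a + a = 0 := by decide

end Stmt0Aux

set_option maxHeartbeats 1000000

/-- Lemma on `𝔽₂ⁿ`: if `X ⊆ 𝓘` has `|X| ≥ 2ⁿ - |B|` and
`⟨S₁,T₂⟩ + ⟨S₂,T₁⟩ = 0` for all pairs in `X`, then `X = {(S, f S) : S ∉ B}` for an
alternating function `f : 𝔽₂ⁿ \ B → B^⊤`. -/
theorem stmt_0 (n : ℕ) (hn : 1 ≤ n) (B : Submodule (ZMod 2) (Fin n → ZMod 2))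
    (X : Set ((Fin n → ZMod 2) × (Fin n → ZMod 2)))
    (hXI : X ⊆ {p | p.1 ∉ B ∧
      ∀ γ ∈ B ⊔ Submodule.span (ZMod 2) {p.1}, ∑ i, γ i * p.2 i = 0})
    (hcard : 2 ^ n - Nat.card B ≤ X.ncard)
    (hpair : ∀ p ∈ X, ∀ q ∈ X, (∑ i, p.1 i * q.2 i) + (∑ i, q.1 i * p.2 i) = 0) :
    ∃ f : (Fin n → ZMod 2) → (Fin n → ZMod 2),
      (∀ S, S ∉ B → ∀ v ∈ B, ∑ i, f S i * v i = 0) ∧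
      (∀ S T, S ∉ B → T ∉ B → (∑ i, S i * f T i) = ∑ i, T i * f S i) ∧
      (∀ S, S ∉ B → ∑ i, S i * f S i = 0) ∧
      X = {p | p.1 ∉ B ∧ p.2 = f p.1} := by
  classical
  -- basic consequences of the hypotheses
  have hBorth : ∀ p ∈ X, ∀ v ∈ B, ∑ i, v i * p.2 i = 0 := fun p hp v hv =>
    (hXI hp).2 v (Submodule.mem_sup_left hv)
  have hself : ∀ p ∈ X, ∑ i, p.1 i * p.2 i = 0 := fun p hp =>
    (hXI hp).2 p.1 (Submodule.mem_sup_right (Submodule.mem_span_singleton_self _))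
  have hsym : ∀ p ∈ X, ∀ q ∈ X, (∑ i, p.1 i * q.2 i) = ∑ i, q.1 i * p.2 i :=
    fun p hp q hq => Stmt0Aux.char2 _ _ (hpair p hp q hq)
  -- the span of B together with the first coordinates, and its orthogonal complement
  set F : Set (Fin n → ZMod 2) := Prod.fst '' X with hF
  set W : Submodule (ZMod 2) (Fin n → ZMod 2) :=
    B ⊔ Submodule.span (ZMod 2) F with hW
  set K : Submodule (ZMod 2) (Fin n → ZMod 2) := (Stmt0Aux.bil n).orthogonal W with hK
  -- two elements of `X` with the same first coordinate differ by an element of `K`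
  have hfiber : ∀ S T T' : Fin n → ZMod 2, (S, T) ∈ X → (S, T') ∈ X →
      T + T' ∈ K := by
    intro S T T' h1 h2
    have hker : W ≤ LinearMap.ker ((Stmt0Aux.bil n).flip (T + T')) := by
      rw [hW]
      apply sup_le
      · intro v hv
        simp only [LinearMap.mem_ker, map_add, LinearMap.add_apply]
        show (∑ i, v i * T i) + (∑ i, v i * T' i) = 0
        rw [hBorth _ h1 v hv, hBorth _ h2 v hv, add_zero]
      · rw [Submodule.span_le]
        rintro _ ⟨q, hq, rfl⟩
        simp only [SetLike.mem_coe, LinearMap.mem_ker, map_add, LinearMap.add_apply]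
        show (∑ i, q.1 i * T i) + (∑ i, q.1 i * T' i) = 0
        have e1 : (∑ i, q.1 i * T i) = ∑ i, S i * q.2 i := hsym q hq (S, T) h1
        have e2 : (∑ i, q.1 i * T' i) = ∑ i, S i * q.2 i := hsym q hq (S, T') h2
        rw [e1, e2]
        exact Stmt0Aux.char2' _
    rw [hK, LinearMap.BilinForm.mem_orthogonal_iff]
    intro y hy
    exact hker hy
  -- a choice of second coordinate for each first coordinate
  set f : (Fin n → ZMod 2) → (Fin n → ZMod 2) := fun S =>
    if h : ∃ T, (S, T) ∈ X then h.choose else 0 with hf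
  have hfX : ∀ p ∈ X, (p.1, f p.1) ∈ X := by
    intro p hp
    have h : ∃ T, (p.1, T) ∈ X := ⟨p.2, hp⟩
    simpa only [hf, dif_pos h] using h.choose_spec
  -- counting: an injection from `X` into `(W \ B) × K`
  set A : Set (Fin n → ZMod 2) := (W : Set _) \ (B : Set _) with hA
  have hFW : ∀ p ∈ X, p.1 ∈ W :=
    fun p hp => Submodule.mem_sup_right (Submodule.subset_span ⟨p, hp, rfl⟩)
  have cardX : Nat.card X ≤ Nat.card A * Nat.card (K : Set (Fin n → ZMod 2)) := by
    have hg : Function.Injective (fun p : X =>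
        ((⟨p.1.1, hFW _ p.2, (hXI p.2).1⟩ : A),
         (⟨p.1.2 + f p.1.1, hfiber _ _ _ p.2 (hfX _ p.2)⟩ :
           (K : Set (Fin n → ZMod 2))))) := by
      intro p q h
      have h1 : p.1.1 = q.1.1 :=
        congrArg (fun r : A × (K : Set (Fin n → ZMod 2)) => (r.1 : Fin n → ZMod 2)) h
      have h2 : p.1.2 + f p.1.1 = q.1.2 + f q.1.1 :=
        congrArg (fun r : A × (K : Set (Fin n → ZMod 2)) => (r.2 : Fin n → ZMod 2)) h
      rw [h1] at h2
      have h3 : p.1.2 = q.1.2 := add_right_cancel h2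
      exact Subtype.ext (Prod.ext h1 h3)
    calc Nat.card X ≤ Nat.card (A × (K : Set (Fin n → ZMod 2))) :=
          Nat.card_le_card_of_injective _ hg
      _ = Nat.card A * Nat.card (K : Set (Fin n → ZMod 2)) := Nat.card_prod _ _
  -- cardinalities
  have hBsubW : (B : Set (Fin n → ZMod 2)) ⊆ (W : Set _) :=
    SetLike.coe_subset_coe.mpr le_sup_left
  have finrankV : finrank (ZMod 2) (Fin n → ZMod 2) = n := by
    simp
  have cardW : Nat.card W = 2 ^ finrank (ZMod 2) W := by
    rw [Nat.card_eq_fintype_card, card_eq_pow_finrank (K := ZMod 2), ZMod.card]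
  have cardK : Nat.card K = 2 ^ finrank (ZMod 2) K := by
    rw [Nat.card_eq_fintype_card, card_eq_pow_finrank (K := ZMod 2), ZMod.card]
  have hfinK : finrank (ZMod 2) K = n - finrank (ZMod 2) W := by
    rw [hK, LinearMap.BilinForm.finrank_orthogonal (Stmt0Aux.bil_nondegenerate n)
      W, finrankV]
  have hWn : finrank (ZMod 2) W ≤ n := by
    have h := Submodule.finrank_le W
    rwa [finrankV] at h
  have hWK : Nat.card W * Nat.card K = 2 ^ n := by
    rw [cardW, cardK, hfinK, ← pow_add]
    congr 1
    omega
  -- deduce that `K` is trivial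
  have hK1 : Nat.card K = 1 := by
    have hXn : X.ncard = Nat.card X := (Nat.card_coe_set_eq X).symm
    have hAn : Nat.card A = A.ncard := Nat.card_coe_set_eq A
    have hKn : Nat.card (K : Set (Fin n → ZMod 2)) = Nat.card K := rfl
    have hWn' : (W : Set (Fin n → ZMod 2)).ncard = Nat.card W :=
      (Nat.card_coe_set_eq _).symm
    have hBn' : (B : Set (Fin n → ZMod 2)).ncard = Nat.card B :=
      (Nat.card_coe_set_eq _).symm
    have hBW : Nat.card B ≤ Nat.card W := by
      rw [← hBn', ← hWn']
      exact Set.ncard_le_ncard hBsubW (Set.toFinite _)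
    have hB1 : 1 ≤ Nat.card B := Nat.card_pos
    have hK1' : 1 ≤ Nat.card K := Nat.card_pos
    have key : 2 ^ n - Nat.card B ≤ (Nat.card W - Nat.card B) * Nat.card K := by
      calc 2 ^ n - Nat.card B ≤ X.ncard := hcard
        _ = Nat.card X := hXn
        _ ≤ Nat.card A * Nat.card (K : Set (Fin n → ZMod 2)) := cardX
        _ = (Nat.card W - Nat.card B) * Nat.card K := by
            rw [hKn, hAn, hA, Set.ncard_diff hBsubW, hWn', hBn']
    have hsub : (Nat.card W - Nat.card B) * Nat.card K
        = 2 ^ n - Nat.card B * Nat.card K := by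
      rw [Nat.sub_mul, hWK]
    have hBK : Nat.card B * Nat.card K ≤ 2 ^ n := by
      calc Nat.card B * Nat.card K ≤ Nat.card W * Nat.card K :=
            Nat.mul_le_mul_right _ hBW
        _ = 2 ^ n := hWK
    have hB2 : Nat.card B ≤ 2 ^ n := le_trans (Nat.le_mul_of_pos_right _ hK1') hBK
    have hle : Nat.card B * Nat.card K ≤ Nat.card B := by omega
    have : Nat.card K ≤ 1 := by
      have := (mul_le_iff_le_one_right (Nat.lt_of_lt_of_le Nat.zero_lt_one hB1)).mp hle
      exact this
    omega
  have hK0 : ∀ x ∈ K, x = (0 : Fin n → ZMod 2) := by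
    intro x hx
    have hs : Subsingleton K := (Nat.card_eq_one_iff_unique.mp hK1).1
    exact Subtype.ext_iff.mp (Subsingleton.elim (⟨x, hx⟩ : K) ⟨0, K.zero_mem⟩)
  -- uniqueness of second coordinates
  have huniq : ∀ S T T' : Fin n → ZMod 2, (S, T) ∈ X → (S, T') ∈ X → T = T' := by
    intro S T T' h1 h2
    have h := hK0 _ (hfiber S T T' h1 h2)
    funext i
    exact Stmt0Aux.char2 _ _ (congrFun h i)
  -- the first projection is injective on `X`, hence covers all of `Bᶜ`
  have hinj1 : Set.InjOn Prod.fst X := by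
    intro p hp q hq h
    have h2 : p.2 = q.2 := by
      apply huniq p.1 p.2 q.2 hp
      rw [h]; exact hq
    exact Prod.ext h h2
  have hFC : F = {x | x ∉ B} := by
    apply Set.eq_of_subset_of_ncard_le
    · rintro _ ⟨p, hp, rfl⟩
      exact (hXI hp).1
    · have h1 : F.ncard = X.ncard := Set.ncard_image_of_injOn hinj1
      have h2 : ({x | x ∉ B} : Set (Fin n → ZMod 2)).ncard = 2 ^ n - Nat.card B := by
        have hc : ((B : Set (Fin n → ZMod 2))ᶜ : Set _) = {x | x ∉ B} := rfl
        have h3 := Set.ncard_add_ncard_compl (B : Set (Fin n → ZMod 2))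
        have h4 : Nat.card (Fin n → ZMod 2) = 2 ^ n := by
          simp [Nat.card_eq_fintype_card]
        have h5 : (B : Set (Fin n → ZMod 2)).ncard = Nat.card B :=
          (Nat.card_coe_set_eq _).symm
        rw [← hc]
        omega
      rw [h1, h2]
      exact hcard
    · exact Set.toFinite _
  have hfmem : ∀ S : Fin n → ZMod 2, S ∉ B → (S, f S) ∈ X := by
    intro S hS
    have : S ∈ F := hFC ▸ hS
    obtain ⟨p, hp, rfl⟩ := this
    exact hfX p hp
  -- conclusion
  refine ⟨f, ?_, ?_, ?_, ?_⟩
  · intro S hS v hv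
    have h := hBorth (S, f S) (hfmem S hS) v hv
    calc (∑ i, f S i * v i) = ∑ i, v i * f S i :=
          Finset.sum_congr rfl fun i _ => mul_comm _ _
      _ = 0 := h
  · intro S T hS hT
    exact hsym (S, f S) (hfmem S hS) (T, f T) (hfmem T hT)
  · intro S hS
    exact hself (S, f S) (hfmem S hS)
  · ext p
    constructor
    · intro hp
      exact ⟨(hXI hp).1, huniq p.1 p.2 (f p.1) hp (hfX p hp)⟩
    · rintro ⟨h1, h2⟩
      have h := hfmem p.1 h1
      rw [← h2] at h
      exact h
end

section
/- Let ℓ be a prime, n ≥ 1, and let B be a linear subspace of 𝔽_ℓⁿ. Define 𝓘 = {(a,b) ∈ 𝔽_ℓⁿ × 𝔽_ℓⁿ : a ∉ B and ⟨γ,b⟩ = 0 for all γ ∈ B + span{a}}. Suppose X ⊆ 𝓘 satisfies |X| ≥ ℓⁿ − |B| and ⟨a₂, b₁⟩ = 0 for all (a₁,b₁),(a₂,b₂) ∈ X. Then X = {(a, 0) : a ∈ 𝔽_ℓⁿ \ B}. -/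
/-- Lemma on `𝔽_ℓⁿ`: if `X ⊆ 𝓘` has `|X| ≥ ℓⁿ - |B|` and
`⟨a₂,b₁⟩ = 0` for all `(a₁,b₁),(a₂,b₂) ∈ X`, then `X = {(a, 0) : a ∉ B}`. -/
theorem stmt_1 (ℓ : ℕ) (hℓ : ℓ.Prime) (n : ℕ) (hn : 1 ≤ n)
    (B : Submodule (ZMod ℓ) (Fin n → ZMod ℓ))
    (X : Set ((Fin n → ZMod ℓ) × (Fin n → ZMod ℓ)))
    (hXI : X ⊆ {p | p.1 ∉ B ∧
      ∀ γ ∈ B ⊔ Submodule.span (ZMod ℓ) {p.1}, ∑ i, γ i * p.2 i = 0})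
    (hcard : ℓ ^ n - Nat.card B ≤ X.ncard)
    (hpair : ∀ p ∈ X, ∀ q ∈ X, ∑ i, q.1 i * p.2 i = 0) :
    X = {p | p.1 ∉ B ∧ p.2 = 0} := by
  classical
  haveI := Fact.mk hℓ
  haveI : NeZero ℓ := ⟨hℓ.ne_zero⟩
  -- the standard bilinear form
  let Φ : LinearMap.BilinForm (ZMod ℓ) (Fin n → ZMod ℓ) := LinearMap.mk₂ (ZMod ℓ) (fun x y => ∑ i, x i * y i)
    (by intro x x' y; simp [Pi.add_apply, add_mul, Finset.sum_add_distrib])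
    (by intro c x y; simp [Pi.smul_apply, smul_eq_mul, Finset.mul_sum, mul_assoc])
    (by intro x y y'; simp [Pi.add_apply, mul_add, Finset.sum_add_distrib])
    (by intro c x y; simp [Pi.smul_apply, smul_eq_mul, Finset.mul_sum, mul_left_comm])
  have hΦ : ∀ x y : (Fin n → ZMod ℓ), Φ x y = ∑ i, x i * y i := fun x y => rfl
  have hrefl : Φ.IsRefl := by
    intro x y h
    rw [hΦ] at h ⊢
    rw [← h]
    exact Finset.sum_congr rfl fun i _ => mul_comm _ _
  have hsingle : ∀ (x : (Fin n → ZMod ℓ)) (j : Fin n), Φ (Pi.single j 1) x = x j := by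
    intro x j
    rw [hΦ]
    simp [Pi.single_apply, Finset.sum_ite_eq]
  have hnd : Φ.Nondegenerate := by
    refine (LinearMap.IsRefl.nondegenerate_iff_separatingLeft hrefl).mpr ?_
    intro x hx
    funext j
    have := hx (Pi.single j 1)
    have h2 : Φ (Pi.single j 1) x = x j := hsingle x j
    rw [hrefl _ _ this] at h2
    simpa using h2.symm
  -- the span of B and all first coordinates of X
  set V : Submodule (ZMod ℓ) (Fin n → ZMod ℓ) := B ⊔ Submodule.span (ZMod ℓ) (Prod.fst '' X) with hV
  have key : ∀ p ∈ X, ∀ v ∈ V, ∑ i, v i * p.2 i = 0 := by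
    intro p hp
    have hle : V ≤ LinearMap.ker (Φ.flip p.2) := by
      apply sup_le
      · intro γ hγ
        have := (hXI hp).2 γ (Submodule.mem_sup_left hγ)
        simpa [LinearMap.mem_ker, hΦ] using this
      · rw [Submodule.span_le]
        rintro _ ⟨q, hq, rfl⟩
        simpa [LinearMap.mem_ker, hΦ] using hpair p hp q hq
    intro v hv
    simpa [LinearMap.mem_ker, hΦ] using hle hv
  have hXsub : X ⊆ ((V : Set (Fin n → ZMod ℓ)) \ (B : Set (Fin n → ZMod ℓ))) ×ˢ (Φ.orthogonal V : Set (Fin n → ZMod ℓ)) := by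
    intro p hp
    refine ⟨⟨?_, (hXI hp).1⟩, ?_⟩
    · exact Submodule.mem_sup_right (Submodule.subset_span ⟨p, hp, rfl⟩)
    · simp only [SetLike.mem_coe, LinearMap.BilinForm.mem_orthogonal_iff]
      intro v hv
      simpa [LinearMap.BilinForm.IsOrtho, hΦ] using key p hp v hv
  -- cardinalities
  have hqK : Fintype.card (ZMod ℓ) = ℓ := ZMod.card ℓ
  have hcardSub : ∀ W : Submodule (ZMod ℓ) (Fin n → ZMod ℓ), Nat.card W = ℓ ^ Module.finrank (ZMod ℓ) W := by
    intro W
    rw [Nat.card_eq_fintype_card, Module.card_eq_pow_finrank (K := ZMod ℓ), hqK]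
  have hFn : Module.finrank (ZMod ℓ) (Fin n → ZMod ℓ) = n := Module.finrank_fin_fun (ZMod ℓ)
  set m := Module.finrank (ZMod ℓ) B with hm
  set d := Module.finrank (ZMod ℓ) V with hd
  have hmd : m ≤ d := Submodule.finrank_mono le_sup_left
  have hdn : d ≤ n := hFn ▸ Submodule.finrank_le V
  have horth : Module.finrank (ZMod ℓ) (Φ.orthogonal V) = n - d := by
    rw [LinearMap.BilinForm.finrank_orthogonal hnd, hFn]
  -- counting
  have hsetV : ∀ W : Submodule (ZMod ℓ) (Fin n → ZMod ℓ), (W : Set (Fin n → ZMod ℓ)).ncard = Nat.card W := by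
    intro W
    rw [← Nat.card_coe_set_eq]
    rfl
  have hdiff : ((V : Set (Fin n → ZMod ℓ)) \ (B : Set (Fin n → ZMod ℓ))).ncard = ℓ ^ d - ℓ ^ m := by
    rw [Set.ncard_diff (by exact_mod_cast hV ▸ le_sup_left) (Set.toFinite _), hsetV, hsetV,
      hcardSub, hcardSub]
  have hprodcard : (((V : Set (Fin n → ZMod ℓ)) \ (B : Set (Fin n → ZMod ℓ))) ×ˢ (Φ.orthogonal V : Set (Fin n → ZMod ℓ))).ncard
      = (ℓ ^ d - ℓ ^ m) * ℓ ^ (n - d) := by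
    rw [← Nat.card_coe_set_eq, Nat.card_congr (Equiv.Set.prod _ _), Nat.card_prod,
      Nat.card_coe_set_eq, Nat.card_coe_set_eq, hdiff, hsetV, hcardSub, horth]
  have hXle : X.ncard ≤ (ℓ ^ d - ℓ ^ m) * ℓ ^ (n - d) := by
    rw [← hprodcard]
    exact Set.ncard_le_ncard hXsub (Set.toFinite _)
  have hℓ1 : 1 < ℓ := hℓ.one_lt
  -- deduce d = n
  have hdn' : d = n := by
    have hBcard : Nat.card B = ℓ ^ m := hcardSub B
    rw [hBcard] at hcard
    have h1 : (ℓ ^ d - ℓ ^ m) * ℓ ^ (n - d) = ℓ ^ n - ℓ ^ (m + (n - d)) := by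
      rw [Nat.sub_mul, ← pow_add, ← pow_add]
      congr 2
      omega
    have h2 : ℓ ^ n - ℓ ^ m ≤ ℓ ^ n - ℓ ^ (m + (n - d)) := le_trans hcard (h1 ▸ hXle)
    have h3 : ℓ ^ (m + (n - d)) ≤ ℓ ^ n := Nat.pow_le_pow_right hℓ.one_lt.le (by omega)
    have h4 : ℓ ^ m ≤ ℓ ^ n := Nat.pow_le_pow_right hℓ.one_lt.le (by omega)
    have h5 : ℓ ^ (m + (n - d)) ≤ ℓ ^ m := by omega
    have h6 : m + (n - d) ≤ m := (Nat.pow_le_pow_iff_right hℓ1).mp h5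
    omega
  have hVtop : V = ⊤ := Submodule.eq_top_of_finrank_eq (by rw [← hd, hdn', hFn])
  -- every second coordinate is zero
  have hX0 : X ⊆ {p | p.1 ∉ B ∧ p.2 = 0} := by
    intro p hp
    refine ⟨(hXI hp).1, funext fun j => ?_⟩
    have := key p hp (Pi.single j 1) (hVtop ▸ Submodule.mem_top)
    rw [← hΦ, hsingle] at this
    simpa using this
  -- the target set has exactly `ℓ ^ n - |B|` elements
  have hTcard : ({p : (Fin n → ZMod ℓ) × (Fin n → ZMod ℓ) | p.1 ∉ B ∧ p.2 = 0}).ncard = ℓ ^ n - Nat.card B := by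
    have hTeq : {p : (Fin n → ZMod ℓ) × (Fin n → ZMod ℓ) | p.1 ∉ B ∧ p.2 = 0} = (fun a : (Fin n → ZMod ℓ) => (a, (0 : (Fin n → ZMod ℓ)))) '' ((B : Set (Fin n → ZMod ℓ))ᶜ) := by
      ext p
      constructor
      · rintro ⟨h1, h2⟩
        exact ⟨p.1, h1, by rw [← h2]⟩
      · rintro ⟨a, ha, rfl⟩
        exact ⟨ha, rfl⟩
    rw [hTeq, Set.ncard_image_of_injective _ (fun a b h => congrArg Prod.fst h)]
    have hcompl := Set.ncard_add_ncard_compl (B : Set (Fin n → ZMod ℓ))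
    have hcF : Nat.card (Fin n → ZMod ℓ) = ℓ ^ n := by
      simp [Nat.card_fun, Nat.card_zmod]
    rw [hsetV B] at hcompl
    omega
  exact Set.eq_of_subset_of_ncard_le hX0 (by rw [hTcard]; exact hcard) (Set.toFinite _)
end

section
/- Let A be a finite abelian group and p a prime. Suppose a ∈ A satisfies p·a = 0 and a ∉ pA, and let b ∈ A. Then every alternating ℤ-bilinear map λ : A × A → ℚ/ℤ satisfies λ(a, b) = 0 if and only if b ∈ pA + ⟨a⟩, where ⟨a⟩ denotes the subgroup generated by a. (Equivalently, the natural restriction map Hom(∧²(A), ℚ/ℤ) → Hom(∧²(⟨a,b⟩), ℚ/ℤ) is the zero map if and only if b ∈ pA + ⟨a⟩.) -/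
/-- for `a ∈ A[p] \ pA` and `b ∈ A`, every alternating ℤ-bilinear map
`λ : A × A → ℚ/ℤ` vanishes at `(a,b)` if and only if `b ∈ pA + ⟨a⟩`. -/
theorem stmt_3 {A : Type*} [AddCommGroup A] [Fintype A] (p : ℕ) (hp : p.Prime)
    (a b : A) (ha : p • a = 0) (haP : ¬ ∃ x : A, a = p • x) :
    (∀ lam : A → A → AddCircle (1 : ℚ),
        (∀ x y z : A, lam (x + y) z = lam x z + lam y z) →
        (∀ x y z : A, lam x (y + z) = lam x y + lam x z) →
        (∀ x : A, lam x x = 0) →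
        lam a b = 0)
      ↔ ∃ x : A, ∃ k : ℤ, b = p • x + k • a := by
  haveI := Fact.mk hp
  constructor
  · intro H
    by_contra hcon
    push_neg at hcon
    -- the submodule pA
    set P : Submodule ℤ A := LinearMap.range ((p : ℤ) • (LinearMap.id : A →ₗ[ℤ] A)) with hP
    have memP : ∀ z : A, z ∈ P ↔ ∃ y : A, p • y = z := by
      intro z
      simp only [hP, LinearMap.mem_range, LinearMap.smul_apply, LinearMap.id_apply,
        natCast_zsmul]
    set V := A ⧸ P with hV
    set π : A →ₗ[ℤ] V := P.mkQ with hπ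
    have hps : ∀ v : V, p • v = 0 := by
      intro v
      obtain ⟨x, rfl⟩ := P.mkQ_surjective v
      have hx : (p • x) ∈ P := (memP _).mpr ⟨x, rfl⟩
      calc p • P.mkQ x = P.mkQ (p • x) := (map_nsmul P.mkQ p x).symm
        _ = 0 := (Submodule.Quotient.mk_eq_zero P).mpr hx
    haveI inst : Module (ZMod p) V := AddCommGroup.zmodModule hps
    -- images of a and b
    have hπzero : ∀ z : A, π z = 0 ↔ ∃ y : A, p • y = z := by
      intro z; rw [hπ, Submodule.mkQ_apply, Submodule.Quotient.mk_eq_zero]; exact memP z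
    have hpa0 : π a ≠ 0 := by
      intro h
      obtain ⟨y, hy⟩ := (hπzero a).mp h
      exact haP ⟨y, hy.symm⟩
    have hspan : ∀ c : ZMod p, c • (π a) ≠ π b := by
      intro c hc
      have hcv : ((c.val : ℤ) : ZMod p) = c := by
        rw [Int.cast_natCast, ZMod.natCast_val, ZMod.cast_id]
      have hc' : ((c.val : ℤ) : ZMod p) • (π a) = π b := by rw [hcv]; exact hc
      rw [Int.cast_smul_eq_zsmul] at hc'
      have : π (b - (c.val : ℤ) • a) = 0 := by
        rw [map_sub, map_zsmul, hc', sub_self]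
      obtain ⟨y, hy⟩ := (hπzero _).mp this
      exact hcon y (c.val : ℤ) (by rw [hy]; abel)
    have hli : LinearIndependent (ZMod p) ![π b, π a] := by
      rw [linearIndependent_fin2]
      exact ⟨by simpa using hpa0, by simpa using hspan⟩
    -- extend to a basis and take coordinate functionals
    have hli' := hli.linearIndepOn_id
    set S := hli'.extend (Set.subset_univ _) with hS
    have hmem : ∀ i : Fin 2, (![π b, π a] i) ∈ S := fun i =>
      hli'.subset_extend _ ⟨i, rfl⟩
    have hmb : π b ∈ S := hmem 0
    have hma : π a ∈ S := hmem 1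
    set B := Module.Basis.extend hli' with hB
    set f : V →ₗ[ZMod p] ZMod p := B.coord ⟨π a, hma⟩ with hf
    set g : V →ₗ[ZMod p] ZMod p := B.coord ⟨π b, hmb⟩ with hg
    have hne : (⟨π a, hma⟩ : S) ≠ ⟨π b, hmb⟩ := by
      intro h
      exact hspan 1 (by rw [one_smul]; exact congrArg Subtype.val h)
    have Bval : ∀ (x : V) (hx : x ∈ S), B ⟨x, hx⟩ = x := fun x hx =>
      Module.Basis.extend_apply_self hli' ⟨x, hx⟩
    have hfa : f (π a) = 1 := by
      have h' : f (B ⟨π a, hma⟩) = 1 := by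
        rw [hf, Module.Basis.coord_apply, Module.Basis.repr_self, Finsupp.single_eq_same]
      rwa [Bval] at h'
    have hfb : f (π b) = 0 := by
      have h' : f (B ⟨π b, hmb⟩) = 0 := by
        rw [hf, Module.Basis.coord_apply, Module.Basis.repr_self,
          Finsupp.single_eq_of_ne hne]
      rwa [Bval] at h'
    have hgb : g (π b) = 1 := by
      have h' : g (B ⟨π b, hmb⟩) = 1 := by
        rw [hg, Module.Basis.coord_apply, Module.Basis.repr_self, Finsupp.single_eq_same]
      rwa [Bval] at h'
    have hga : g (π a) = 0 := by
      have h' : g (B ⟨π a, hma⟩) = 0 := by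
        rw [hg, Module.Basis.coord_apply, Module.Basis.repr_self, Finsupp.single_eq_of_ne (fun h => hne h.symm)]
      rwa [Bval] at h'
    -- character ZMod p →+ ℚ/ℤ
    have hp0 : (p : ℚ) ≠ 0 := Nat.cast_ne_zero.mpr hp.pos.ne'
    set φ : ℤ →+ AddCircle (1 : ℚ) :=
      AddMonoidHom.mk' (fun n => (((n : ℚ) / p : ℚ) : AddCircle (1 : ℚ)))
        (by
          intro m n
          push_cast
          rw [add_div]
          rfl) with hφ
    have hφp : φ (p : ℤ) = 0 := by
      simp only [hφ, AddMonoidHom.mk'_apply, Int.cast_natCast, div_self hp0]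
      exact AddCircle.coe_period 1
    set χ : ZMod p →+ AddCircle (1 : ℚ) := ZMod.lift p ⟨φ, hφp⟩ with hχ
    have hq : (((1 : ℚ) / p : ℚ) : AddCircle (1 : ℚ)) ≠ 0 := by
      intro h
      obtain ⟨n, hn⟩ := (AddCircle.coe_eq_zero_iff (1 : ℚ)).mp h
      rw [zsmul_eq_mul, mul_one] at hn
      have hpn : ((p * n : ℤ) : ℚ) = 1 := by
        push_cast
        rw [hn, mul_one_div, div_self hp0]
      have hint : (p : ℤ) * n = 1 := by exact_mod_cast hpn
      exact hp.one_lt.ne' (by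
        have := Int.eq_one_of_mul_eq_one_right (by positivity) hint
        exact_mod_cast this)
    have hχ1 : χ 1 ≠ 0 := by
      have h1c : ((1 : ℤ) : ZMod p) = 1 := by norm_cast
      rw [hχ, ← h1c, ZMod.lift_coe]
      simpa only [hφ, AddMonoidHom.mk'_apply, Int.cast_one] using hq
    -- the alternating bilinear map
    set lam : A → A → AddCircle (1 : ℚ) := fun x y =>
      χ (f (π x) * g (π y) - f (π y) * g (π x)) with hlam
    have h1 : ∀ x y z : A, lam (x + y) z = lam x z + lam y z := by
      intro x y z
      rw [hlam]
      show χ (f (π (x + y)) * g (π z) - f (π z) * g (π (x + y))) =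
        χ (f (π x) * g (π z) - f (π z) * g (π x)) +
          χ (f (π y) * g (π z) - f (π z) * g (π y))
      rw [map_add π x y, map_add f, map_add g, ← map_add χ]
      congr 1
      ring
    have h2 : ∀ x y z : A, lam x (y + z) = lam x y + lam x z := by
      intro x y z
      rw [hlam]
      show χ (f (π x) * g (π (y + z)) - f (π (y + z)) * g (π x)) =
        χ (f (π x) * g (π y) - f (π y) * g (π x)) +
          χ (f (π x) * g (π z) - f (π z) * g (π x))
      rw [map_add π y z, map_add f, map_add g, ← map_add χ]
      congr 1
      ring
    have h3 : ∀ x : A, lam x x = 0 := by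
      intro x
      rw [hlam]
      simp
    have := H lam h1 h2 h3
    rw [hlam] at this
    simp only [hfa, hfb, hga, hgb, one_mul, mul_zero, sub_zero, mul_one, zero_mul] at this
    exact hχ1 this
  · rintro ⟨x, k, rfl⟩ lam h1 h2 h3
    -- package lam as a biadditive map
    have hr0 : ∀ u : A, lam u 0 = 0 := by
      intro u
      have := h2 u 0 0
      rw [add_zero] at this
      exact (left_eq_add.mp this)
    have hl0 : ∀ u : A, lam 0 u = 0 := by
      intro u
      have := h1 0 0 u
      rw [add_zero] at this
      exact (left_eq_add.mp this)
    set F : A →+ A →+ AddCircle (1 : ℚ) :=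
      AddMonoidHom.mk' (fun u => AddMonoidHom.mk' (lam u) (fun y z => h2 u y z))
        (by
          intro u v
          ext z
          exact h1 u v z) with hF
    have hFa : ∀ u v : A, F u v = lam u v := fun u v => rfl
    have key : lam a (p • x + k • a) = 0 := by
      have e1 : F a (p • x) = F (p • a) x := by
        rw [map_nsmul, map_nsmul F, AddMonoidHom.nsmul_apply]
      have e2 : F a (k • a) = k • F a a := map_zsmul (F a) k a
      have : F a (p • x + k • a) = F (p • a) x + k • F a a := by
        rw [map_add, e1, e2]
      rw [hFa, hFa, hFa] at this
      rw [this, ha, hl0, h3, smul_zero, add_zero]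
    exact key
end

section
/- Let A be a finite abelian group and p a prime. Suppose a ∈ A satisfies p·a = 0 and a ∉ pA, and suppose b ∈ A satisfies b ∉ pA + ⟨a⟩. Then the order of b is divisible by p, the subgroups ⟨a⟩ and ⟨b⟩ intersect trivially (⟨a⟩ ∩ ⟨b⟩ = {0}), the subgroup Γ = ⟨a, b⟩ is isomorphic to ⟨a⟩ ⊕ ⟨b⟩, and the quotient Γ/pΓ has order p² (equivalently, Γ ⊗_ℤ 𝔽_p has dimension 2 over 𝔽_p). -/
open AddSubgroup

/-- for `a ∈ A[p] \ pA` and `b ∉ pA + ⟨a⟩`: `p ∣ ord(b)`,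
`⟨a⟩ ∩ ⟨b⟩ = 0`, `Γ = ⟨a,b⟩ ≅ ⟨a⟩ ⊕ ⟨b⟩`, and `|Γ/pΓ| = p²`. -/
theorem stmt_5 {A : Type*} [AddCommGroup A] [Fintype A] (p : ℕ) (hp : p.Prime)
    (a b : A) (ha : p • a = 0) (haP : ¬ ∃ x : A, a = p • x)
    (hb : ¬ ∃ x : A, ∃ k : ℤ, b = p • x + k • a) :
    p ∣ addOrderOf b ∧
    AddSubgroup.zmultiples a ⊓ AddSubgroup.zmultiples b = ⊥ ∧
    Nonempty ((AddSubgroup.closure ({a, b} : Set A)) ≃+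
      (AddSubgroup.zmultiples a × AddSubgroup.zmultiples b)) ∧
    Nat.card ((AddSubgroup.closure ({a, b} : Set A)) ⧸
      (AddSubgroup.map
        (DistribMulAction.toAddMonoidHom (AddSubgroup.closure ({a, b} : Set A)) p)
        (⊤ : AddSubgroup (AddSubgroup.closure ({a, b} : Set A)))))
      = p ^ 2 := by
  haveI := Fact.mk hp
  have bez : ∀ d : ℤ, ¬ (p:ℤ) ∣ d → ∃ u v : ℤ, u * p + v * d = 1 := by
    intro d hd
    obtain ⟨u, v, h⟩ := (Prime.coprime_iff_not_dvd (Nat.prime_iff_prime_int.1 hp)).2 hd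
    exact ⟨u, v, by linarith⟩
  have ha0 : a ≠ 0 := fun h => haP ⟨0, by simp [h]⟩
  have hpa : (p : ℤ) • a = 0 := by rw [natCast_zsmul]; exact ha
  have horda : addOrderOf a = p := addOrderOf_eq_prime ha ha0
  have hn0 : 0 < addOrderOf b := addOrderOf_pos b
  have hnb : (addOrderOf b : ℤ) • b = 0 := addOrderOf_dvd_iff_zsmul_eq_zero.1 dvd_rfl
  have np : ∀ (u : ℤ) (x : A), (u * (p:ℤ)) • x = p • (u • x) := by
    intro u x
    rw [mul_comm, mul_zsmul, natCast_zsmul]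
  -- x = v • (k • x) if u*p + v*k = 1 and p • x = 0
  have unit : ∀ (x : A) (u v k : ℤ), u * p + v * k = 1 → (p:ℤ) • x = 0 →
      x = v • (k • x) := by
    intro x u v k huv hx
    have hx' : p • x = 0 := by rwa [natCast_zsmul] at hx
    calc x = (u * p + v * k) • x := by rw [huv, one_zsmul]
    _ = v • (k • x) := by
        rw [add_zsmul, mul_zsmul, mul_zsmul, natCast_zsmul, hx', smul_zero, zero_add]
  ----------------------------------------------------------------
  -- Part 1 : p ∣ addOrderOf b
  have h1 : p ∣ addOrderOf b := by
    by_contra hpd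
    obtain ⟨u, v, huv⟩ := bez (addOrderOf b) (by exact_mod_cast hpd)
    apply hb
    refine ⟨u • b, 0, ?_⟩
    calc b = (u * p + v * (addOrderOf b : ℤ)) • b := by rw [huv, one_zsmul]
    _ = p • (u • b) + v • ((addOrderOf b : ℤ) • b) := by
        rw [add_zsmul, np, mul_zsmul]
    _ = p • (u • b) + (0:ℤ) • a := by
        rw [hnb, smul_zero, zero_zsmul]
  ----------------------------------------------------------------
  -- a is not a multiple of b
  have hab : a ∉ zmultiples b := by
    intro hmem
    obtain ⟨c, hc⟩ := mem_zmultiples_iff.1 hmem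
    obtain ⟨m, hm⟩ := h1
    have hpz : (p:ℤ) ≠ 0 := by exact_mod_cast hp.ne_zero
    have hdvd : ((p:ℤ) * m) ∣ (p:ℤ) * c := by
      have : (addOrderOf b : ℤ) ∣ (p:ℤ) * c := by
        rw [addOrderOf_dvd_iff_zsmul_eq_zero, mul_zsmul, hc, hpa]
      rw [hm] at this
      exact_mod_cast this
    have hmc : (m:ℤ) ∣ c := (mul_dvd_mul_iff_left hpz).1 hdvd
    obtain ⟨d, hd⟩ := hmc
    have hpmz : ((p:ℤ) * m) • b = 0 := by
      rw [show ((p:ℤ) * m) = ((addOrderOf b : ℤ)) from by rw [hm]; push_cast; ring, hnb]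
    have hpd : ¬ (p:ℤ) ∣ d := by
      rintro ⟨e, he⟩
      apply ha0
      rw [← hc, hd, he, show ((m:ℤ) * ((p:ℤ) * e)) = e * ((p:ℤ) * m) from by ring,
        mul_zsmul, hpmz, smul_zero]
    have hax : a = d • ((m:ℤ) • b) := by
      rw [← hc, hd, show ((m:ℤ) * d) = d * m from by ring, mul_zsmul]
    have hpx : (p:ℤ) • ((m:ℤ) • b) = 0 := by rw [← mul_zsmul, hpmz]
    by_cases hpm : (p:ℤ) ∣ (m:ℤ)
    · obtain ⟨t, ht⟩ := hpm
      apply haP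
      refine ⟨(t * d) • b, ?_⟩
      rw [← hc, hd, ht, show ((p:ℤ) * t * d) = (p:ℤ) * (t * d) from by ring,
        mul_zsmul, natCast_zsmul]
    · apply hb
      obtain ⟨e, f, hef⟩ := bez d hpd
      have hxa : (m:ℤ) • b = f • a := by
        rw [hax, ← mul_zsmul]
        calc (m:ℤ) • b = f • (d • ((m:ℤ) • b)) := unit _ e f d hef hpx
        _ = (f * d) • ((m:ℤ) • b) := (mul_zsmul _ _ _).symm
      obtain ⟨u, v, huv⟩ := bez m hpm
      refine ⟨u • b, v * f, ?_⟩
      calc b = (u * p + v * (m:ℤ)) • b := by rw [huv, one_zsmul]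
      _ = p • (u • b) + v • ((m:ℤ) • b) := by
          rw [add_zsmul, np, mul_zsmul]
      _ = p • (u • b) + (v * f) • a := by
          rw [hxa, ← mul_zsmul]
  ----------------------------------------------------------------
  -- Part 2 : trivial intersection
  have h2 : zmultiples a ⊓ zmultiples b = ⊥ := by
    rw [eq_bot_iff]
    rintro x ⟨hxa, hxb⟩
    rw [mem_bot]
    by_contra hx0
    obtain ⟨k, hk⟩ := mem_zmultiples_iff.1 hxa
    obtain ⟨c, hc⟩ := mem_zmultiples_iff.1 hxb
    have hpk : ¬ (p:ℤ) ∣ k := by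
      rintro ⟨j, hj⟩
      exact hx0 (by rw [← hk, hj, mul_comm, mul_zsmul, hpa, smul_zero])
    obtain ⟨u, v, huv⟩ := bez k hpk
    apply hab
    have : a = (v * c) • b := by
      rw [mul_zsmul, hc, ← hk, ← mul_zsmul]
      calc a = v • (k • a) := unit a u v k huv hpa
      _ = (v * k) • a := (mul_zsmul _ _ _).symm
    rw [this]
    exact zsmul_mem_zmultiples b (v * c)
  ----------------------------------------------------------------
  -- Part 3 : closure {a,b} ≃+ Za × Zb
  have hGamma : closure ({a, b} : Set A) = zmultiples a ⊔ zmultiples b := by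
    rw [show ({a, b} : Set A) = {a} ∪ {b} from Set.insert_eq a {b}, AddSubgroup.closure_union,
      ← zmultiples_eq_closure, ← zmultiples_eq_closure]
  let f : (zmultiples a) × (zmultiples b) →+ A :=
    ((zmultiples a).subtype).coprod ((zmultiples b).subtype)
  have hfapp : ∀ x : (zmultiples a) × (zmultiples b), f x = (x.1 : A) + (x.2 : A) :=
    fun _ => rfl
  have hfr : f.range = closure ({a, b} : Set A) := by
    rw [hGamma]
    apply le_antisymm
    · rintro _ ⟨⟨x, y⟩, rfl⟩
      rw [hfapp]
      exact add_mem (mem_sup_left x.2) (mem_sup_right y.2)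
    · rw [sup_le_iff]
      constructor
      · intro x hx; exact ⟨(⟨x, hx⟩, 0), by rw [hfapp]; simp⟩
      · intro x hx; exact ⟨(0, ⟨x, hx⟩), by rw [hfapp]; simp⟩
  have hfi : Function.Injective f := by
    rw [injective_iff_map_eq_zero]
    rintro ⟨x, y⟩ hxy
    rw [hfapp] at hxy
    have hx : (x : A) = -(y : A) := eq_neg_of_add_eq_zero_left hxy
    have hmem : (x : A) ∈ zmultiples a ⊓ zmultiples b :=
      ⟨x.2, by rw [hx]; exact AddSubgroup.neg_mem _ y.2⟩
    rw [h2, mem_bot] at hmem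
    have hy : (y : A) = 0 := by rw [hmem, zero_add] at hxy; exact hxy
    exact Prod.ext (Subtype.ext hmem) (Subtype.ext hy)
  have e : (closure ({a, b} : Set A)) ≃+ (zmultiples a) × (zmultiples b) :=
    (AddEquiv.addSubgroupCongr hfr.symm).trans (AddMonoidHom.ofInjective hfi).symm
  ----------------------------------------------------------------
  -- Part 4 : cardinality of the quotient
  refine ⟨h1, h2, ⟨e⟩, ?_⟩
  set Γ := closure ({a, b} : Set A) with hΓ
  set φ := DistribMulAction.toAddMonoidHom Γ p with hφ
  have hmap : AddSubgroup.map φ (⊤ : AddSubgroup Γ) = φ.range :=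
    (AddMonoidHom.range_eq_map φ).symm
  have hcardΓ : Nat.card Γ = p * addOrderOf b := by
    rw [Nat.card_congr e.toEquiv, Nat.card_prod, Nat.card_zmultiples, Nat.card_zmultiples,
      horda]
  have hcomm : Γ.subtype.comp φ = (DistribMulAction.toAddMonoidHom A p).comp Γ.subtype := by
    ext x; rfl
  have hmapped : φ.range.map Γ.subtype = zmultiples (p • b) := by
    rw [← AddMonoidHom.range_comp, hcomm, AddMonoidHom.range_comp, range_subtype]
    rw [hGamma, AddSubgroup.map_sup, AddMonoidHom.map_zmultiples,
      AddMonoidHom.map_zmultiples]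
    have h0 : DistribMulAction.toAddMonoidHom A p a = 0 := ha
    have hpb : DistribMulAction.toAddMonoidHom A p b = p • b := rfl
    rw [h0, hpb, zmultiples_zero_eq_bot, bot_sup_eq]
  have hcard_range : Nat.card φ.range = addOrderOf b / p := by
    have hi : Function.Injective Γ.subtype := subtype_injective Γ
    rw [Nat.card_congr (AddSubgroup.equivMapOfInjective φ.range Γ.subtype hi).toEquiv,
      hmapped, Nat.card_zmultiples, addOrderOf_nsmul, Nat.gcd_comm, Nat.gcd_eq_left h1]
  obtain ⟨m, hm⟩ := h1
  have hm0 : 0 < m := by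
    rcases Nat.eq_zero_or_pos m with h | h
    · rw [h, Nat.mul_zero] at hm; omega
    · exact h
  have hq := AddSubgroup.card_eq_card_quotient_mul_card_addSubgroup
    (AddSubgroup.map φ (⊤ : AddSubgroup Γ))
  rw [hmap] at hq
  rw [hcardΓ, hcard_range, hm, Nat.mul_div_cancel_left _ hp.pos] at hq
  rw [hmap]
  refine Nat.eq_of_mul_eq_mul_right hm0 ?_
  rw [← hq]; ring
end

section
/- Let A be a finite abelian group and ℓ a prime. Let B = A[ℓ] ∩ ℓA, where A[ℓ] = {x ∈ A : ℓ·x = 0} and ℓA = {ℓ·x : x ∈ A}. Then for any a, a' ∈ A[ℓ] \ B there exists a group automorphism ψ of A with ψ(a) = a'. -/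
section aux

variable {A : Type*} [AddCommGroup A] {ℓ : ℕ}

/-- If `ℓ • v = 0` then `n • v` only depends on `n` mod `ℓ`. -/
lemma smul_congr_of_torsion (v : A) (hv : ℓ • v = 0) {n m : ℕ}
    (h : (n : ZMod ℓ) = (m : ZMod ℓ)) : n • v = m • v := by
  have hmod : n % ℓ = m % ℓ := (ZMod.natCast_eq_natCast_iff n m ℓ).1 h
  have key : ∀ k : ℕ, k • v = (k % ℓ) • v := by
    intro k
    conv_lhs => rw [← Nat.div_add_mod k ℓ, add_nsmul, mul_nsmul, hv, smul_zero, zero_add]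
  rw [key n, key m, hmod]

/-- The transvection-like automorphism `x ↦ x + (f x).val • v`. -/
lemma exists_transvection (hℓ : ℓ.Prime) (v : A) (hv : ℓ • v = 0) (f : A →+ ZMod ℓ)
    (hu : (1 : ZMod ℓ) + f v ≠ 0) :
    ∃ ψ : A ≃+ A, ∀ x, ψ x = x + (f x).val • v := by
  haveI : Fact ℓ.Prime := ⟨hℓ⟩
  haveI : NeZero ℓ := ⟨hℓ.ne_zero⟩
  set u : ZMod ℓ := 1 + f v with hu_def
  have hcast : ∀ s : ZMod ℓ, ((s.val : ℕ) : ZMod ℓ) = s := fun s => ZMod.natCast_rightInverse s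
  have hsmul_add : ∀ s t : ZMod ℓ, ((s + t).val) • v = s.val • v + t.val • v := by
    intro s t
    rw [← add_nsmul]
    exact smul_congr_of_torsion v hv (by push_cast [hcast]; ring)
  have hfv_smul : ∀ s : ZMod ℓ, (s.val : ℕ) • f v = s * f v := by
    intro s
    rw [nsmul_eq_mul, hcast]
  refine ⟨{ toFun := fun x => x + (f x).val • v
            invFun := fun x => x - ((u⁻¹ * f x).val) • v
            left_inv := ?_
            right_inv := ?_
            map_add' := ?_ }, fun x => rfl⟩
  · intro x
    have h1 : f (x + (f x).val • v) = f x * u := by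
      rw [map_add, map_nsmul, hfv_smul, hu_def]; ring
    simp only [h1]
    have h2 : u⁻¹ * (f x * u) = f x := by field_simp
    rw [h2]
    abel
  · intro x
    have h1 : f (x - (u⁻¹ * f x).val • v) = u⁻¹ * f x := by
      rw [map_sub, map_nsmul, hfv_smul]
      have h2 : u⁻¹ * u = 1 := inv_mul_cancel₀ hu
      rw [hu_def] at h2
      linear_combination (-(f x)) * h2
    simp only [h1]
    abel
  · intro x y
    simp only [map_add, hsmul_add]
    abel

end aux

/-- for a finite abelian group `A`, a prime `ℓ`, and
`a, a' ∈ A[ℓ] \ (A[ℓ] ∩ ℓA)`, there is an automorphism `ψ` of `A` with `ψ a = a'`. -/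
theorem stmt_6 {A : Type*} [AddCommGroup A] [Fintype A] (ℓ : ℕ) (hℓ : ℓ.Prime)
    (a a' : A) (ha : ℓ • a = 0) (ha' : ℓ • a' = 0)
    (haB : ¬ (ℓ • a = 0 ∧ ∃ x : A, a = ℓ • x))
    (ha'B : ¬ (ℓ • a' = 0 ∧ ∃ x : A, a' = ℓ • x)) :
    ∃ ψ : A ≃+ A, ψ a = a' := by
  obtain ⟨m, rfl⟩ : ∃ m, ℓ = m + 1 := ⟨ℓ - 1, (Nat.succ_pred_eq_of_pos hℓ.pos).symm⟩
  set ℓ : ℕ := m + 1 with hℓ_def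
  haveI : Fact ℓ.Prime := ⟨hℓ⟩
  haveI : NeZero ℓ := ⟨hℓ.ne_zero⟩
  -- the subgroup ℓA
  set N : AddSubgroup A :=
    { carrier := Set.range (fun x : A => ℓ • x)
      add_mem' := by rintro _ _ ⟨x, rfl⟩ ⟨y, rfl⟩; exact ⟨x + y, by simp [smul_add]⟩
      zero_mem' := ⟨0, by simp⟩
      neg_mem' := by rintro _ ⟨x, rfl⟩; exact ⟨-x, by simp⟩ } with hN
  have hamem : a ∉ N := by
    rintro ⟨x, hx⟩
    exact haB ⟨ha, ⟨x, hx.symm⟩⟩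
  have ha'mem : a' ∉ N := by
    rintro ⟨x, hx⟩
    exact ha'B ⟨ha', ⟨x, hx.symm⟩⟩
  letI : Module (ZMod ℓ) (A ⧸ N) := QuotientAddGroup.zmodModule (fun x => ⟨x, rfl⟩)
  set q : A ⧸ N := QuotientAddGroup.mk a with hq_def
  set q' : A ⧸ N := QuotientAddGroup.mk a' with hq'_def
  have hq : q ≠ 0 := by
    simpa [hq_def, QuotientAddGroup.eq_zero_iff] using hamem
  have hq' : q' ≠ 0 := by
    simpa [hq'_def, QuotientAddGroup.eq_zero_iff] using ha'mem
  -- find a linear functional with value 1 at q and nonzero at q'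
  obtain ⟨g, hg⟩ : ∃ g : (A ⧸ N) →ₗ[ZMod ℓ] (ZMod ℓ), g q ≠ 0 := by
    by_contra h
    push_neg at h
    exact hq ((Module.forall_dual_apply_eq_zero_iff (ZMod ℓ) q).1 h)
  obtain ⟨h, hh⟩ : ∃ h : (A ⧸ N) →ₗ[ZMod ℓ] (ZMod ℓ), h q' ≠ 0 := by
    by_contra h
    push_neg at h
    exact hq' ((Module.forall_dual_apply_eq_zero_iff (ZMod ℓ) q').1 h)
  obtain ⟨f₀, hf₀a, hf₀a'⟩ :
      ∃ f₀ : (A ⧸ N) →ₗ[ZMod ℓ] (ZMod ℓ), f₀ q = 1 ∧ f₀ q' ≠ 0 := by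
    by_cases hgq' : g q' ≠ 0
    · exact ⟨(g q)⁻¹ • g, by simp [inv_mul_cancel₀ hg], by
        simp only [LinearMap.smul_apply, smul_eq_mul]
        exact mul_ne_zero (inv_ne_zero hg) hgq'⟩
    · push_neg at hgq'
      by_cases hhq : h q = 0
      · exact ⟨(g q)⁻¹ • g + h, by simp [hgq', hhq, inv_mul_cancel₀ hg], by
          simp [hgq', hhq, hh]⟩
      · exact ⟨(h q)⁻¹ • h, by simp [inv_mul_cancel₀ hhq], by
          simp only [LinearMap.smul_apply, smul_eq_mul]
          exact mul_ne_zero (inv_ne_zero hhq) hh⟩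
  -- assemble the additive hom A →+ ZMod ℓ
  set f : A →+ ZMod ℓ := f₀.toAddMonoidHom.comp (QuotientAddGroup.mk' N) with hf_def
  have hfa : f a = 1 := hf₀a
  have hfa' : f a' ≠ 0 := hf₀a'
  set v : A := a' - a with hv_def
  have hv : ℓ • v = 0 := by rw [hv_def, smul_sub, ha, ha', sub_zero]
  have hu : (1 : ZMod ℓ) + f v ≠ 0 := by
    have : f v = f a' - 1 := by rw [hv_def, map_sub, hfa]
    rw [this]
    simpa using hfa'
  obtain ⟨ψ, hψ⟩ := exists_transvection hℓ v hv f hu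
  refine ⟨ψ, ?_⟩
  rw [hψ a, hfa]
  have : ((1 : ZMod ℓ).val) = 1 := ZMod.val_one' ▸ (by
    haveI : Fact (1 < ℓ) := ⟨hℓ.one_lt⟩
    exact ZMod.val_one ℓ)
  rw [this, one_nsmul, hv_def]
  abel
end

section
/- Let A be a finite abelian group and ℓ a prime. Let A[ℓ] = {x ∈ A : ℓ·x = 0} and ℓA = {ℓ·x : x ∈ A}, and for a ∈ A let Adm(a) = {b ∈ A : λ(a,b) = 0 for every alternating ℤ-bilinear map λ : A × A → ℚ/ℤ}. Then for any a, a' ∈ A[ℓ] with a ∉ ℓA and a' ∉ ℓA, the images of Adm(a) and Adm(a') under the quotient map A → A/A[ℓ] have the same cardinality. -/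
section aux

variable {A : Type*} [AddCommGroup A]

/-- Embedding `ZMod ℓ → ℚ/ℤ`, `k ↦ k/ℓ`. -/
noncomputable def iotaQ (ℓ : ℕ) [NeZero ℓ] : ZMod ℓ →+ AddCircle (1 : ℚ) :=
  ZMod.lift ℓ ⟨AddMonoidHom.mk' (fun j : ℤ ↦ ((j / ℓ : ℚ) : AddCircle (1 : ℚ)))
    (by
      intro x y
      push_cast
      rw [add_div]
      exact AddCircle.coe_add (p := (1 : ℚ)) _ _),
    by
      have h1 : ((ℓ : ℚ) / ℓ) = 1 := div_self (by exact_mod_cast NeZero.ne ℓ)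
      simp only [AddMonoidHom.mk'_apply, Int.cast_natCast, h1]
      exact AddCircle.coe_period 1⟩

lemma iotaQ_eq_zero {ℓ : ℕ} [NeZero ℓ] {k : ZMod ℓ} (h : iotaQ ℓ k = 0) : k = 0 := by
  have hk : iotaQ ℓ ((k.val : ℤ) : ZMod ℓ) = (((k.val : ℤ) / ℓ : ℚ) : AddCircle (1 : ℚ)) :=
    ZMod.lift_coe _ _ _
  rw [show ((k.val : ℤ) : ZMod ℓ) = k by simp, h] at hk
  obtain ⟨n, hn⟩ := (AddCircle.coe_eq_zero_iff (1 : ℚ)).mp hk.symm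
  have hℓ0 : (ℓ : ℚ) ≠ 0 := by exact_mod_cast NeZero.ne ℓ
  rw [zsmul_eq_mul, mul_one, eq_div_iff hℓ0] at hn
  have hdvd' : ℓ ∣ k.val := by
    have h2 : ((k.val : ℤ)) = (ℓ : ℤ) * n := by
      have := hn.symm.trans (mul_comm (n : ℚ) (ℓ : ℚ))
      exact_mod_cast this
    exact Int.natCast_dvd_natCast.mp ⟨n, h2⟩
  have h0 : k.val = 0 := Nat.eq_zero_of_dvd_of_lt hdvd' (ZMod.val_lt k)
  exact (ZMod.val_eq_zero k).mp h0

/-- A nonzero vector in a vector space admits an additive functional not vanishing on it. -/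
lemma exists_functional {K V : Type*} [Field K] [AddCommGroup V] [Module K V]
    {v : V} (hv : v ≠ 0) : ∃ φ : V →+ K, φ v ≠ 0 := by
  have h := (not_iff_not.mpr (Module.forall_dual_apply_eq_zero_iff K v)).mpr hv
  push_neg at h
  obtain ⟨φ, hφ⟩ := h
  exact ⟨φ.toAddMonoidHom, hφ⟩

/-- Existence of a `ZMod ℓ`-valued character vanishing on a subgroup containing `ℓA`
but not at a given `b ∉ H`. -/
lemma exists_char (ℓ : ℕ) (hℓ : ℓ.Prime) (H : AddSubgroup A) (hH : ∀ x : A, ℓ • x ∈ H)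
    {b : A} (hb : b ∉ H) : ∃ χ : A →+ ZMod ℓ, (∀ h ∈ H, χ h = 0) ∧ χ b ≠ 0 := by
  haveI : Fact ℓ.Prime := ⟨hℓ⟩
  have hb' : (QuotientAddGroup.mk' H b) ≠ 0 := by
    simpa [QuotientAddGroup.eq_zero_iff] using hb
  obtain ⟨φ, hφ⟩ := @exists_functional (ZMod ℓ) (A ⧸ H) _ _
    (QuotientAddGroup.zmodModule hH) _ hb'
  refine ⟨φ.comp (QuotientAddGroup.mk' H), ?_, hφ⟩
  intro h hh
  have h3 : QuotientAddGroup.mk' H h = 0 := (QuotientAddGroup.eq_zero_iff h).mpr hh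
  show φ (QuotientAddGroup.mk' H h) = 0
  rw [h3, map_zero]

end aux

/-- The set `Adm(a)` of `b ∈ A` such that `λ(a,b) = 0` for every alternating
ℤ-bilinear map `λ : A × A → ℚ/ℤ`. -/
def Adm {A : Type*} [AddCommGroup A] (a : A) : Set A :=
  {b | ∀ lam : A → A → AddCircle (1 : ℚ),
    (∀ x y z : A, lam (x + y) z = lam x z + lam y z) →
    (∀ x y z : A, lam x (y + z) = lam x y + lam x z) →
    (∀ x : A, lam x x = 0) →
    lam a b = 0}

/-- The ℓ-torsion subgroup `A[ℓ] = {x : ℓ • x = 0}` of an abelian group `A`. -/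
def torsionSub {A : Type*} [AddCommGroup A] (ℓ : ℕ) : AddSubgroup A where
  carrier := {x | ℓ • x = 0}
  zero_mem' := by simp
  add_mem' := by
    intro x y hx hy
    simp only [Set.mem_setOf_eq, smul_add] at *
    rw [hx, hy, add_zero]
  neg_mem' := by
    intro x hx
    simp only [Set.mem_setOf_eq, smul_neg] at *
    rw [hx, neg_zero]

section aux2

variable {A : Type*} [AddCommGroup A]

/-- `Adm a = ℤa + ℓA` for `a` of order `ℓ` not in `ℓA`. -/
lemma adm_eq (ℓ : ℕ) (hℓ : ℓ.Prime) (a : A) (ha : ℓ • a = 0) (haP : ¬ ∃ x : A, a = ℓ • x) :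
    Adm a = {b | ∃ n : ℤ, ∃ v : A, b = n • a + ℓ • v} := by
  haveI : NeZero ℓ := ⟨hℓ.ne_zero⟩
  ext b
  constructor
  · intro hbAdm
    by_contra hb
    set L : AddSubgroup A := (zsmulAddGroupHom (ℓ : ℤ)).range with hL
    have hmemL : ∀ x : A, ℓ • x ∈ L := fun x =>
      ⟨x, by simp [zsmulAddGroupHom_apply, natCast_zsmul]⟩
    set H : AddSubgroup A := AddSubgroup.zmultiples a ⊔ L with hHdef
    have hLH : ∀ x : A, ℓ • x ∈ H := fun x => AddSubgroup.mem_sup_right (hmemL x)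
    have hbH : b ∉ H := by
      intro hmem
      rcases (AddSubgroup.mem_sup).mp hmem with ⟨x, hx, y, hy, hxy⟩
      rcases AddSubgroup.mem_zmultiples_iff.mp hx with ⟨n, rfl⟩
      rcases hy with ⟨v, rfl⟩
      exact hb ⟨n, v, by rw [← hxy]; simp [zsmulAddGroupHom_apply, natCast_zsmul]⟩
    obtain ⟨χ, hχ0, hχb⟩ := exists_char ℓ hℓ H hLH hbH
    have haNotL : a ∉ L := by
      rintro ⟨x, hx⟩
      exact haP ⟨x, by rw [← hx]; simp [zsmulAddGroupHom_apply, natCast_zsmul]⟩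
    obtain ⟨ψ, hψ0, hψa⟩ := exists_char ℓ hℓ L hmemL haNotL
    set lam : A → A → AddCircle (1 : ℚ) :=
      fun x y => iotaQ ℓ (χ x * ψ y - χ y * ψ x) with hlam
    have h1 : ∀ x y z : A, lam (x + y) z = lam x z + lam y z := by
      intro x y z
      show iotaQ ℓ (χ (x + y) * ψ z - χ z * ψ (x + y)) = _
      rw [show χ (x + y) * ψ z - χ z * ψ (x + y)
          = (χ x * ψ z - χ z * ψ x) + (χ y * ψ z - χ z * ψ y) by
        rw [map_add, map_add]; ring, map_add]
    have h2 : ∀ x y z : A, lam x (y + z) = lam x y + lam x z := by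
      intro x y z
      show iotaQ ℓ (χ x * ψ (y + z) - χ (y + z) * ψ x) = _
      rw [show χ x * ψ (y + z) - χ (y + z) * ψ x
          = (χ x * ψ y - χ y * ψ x) + (χ x * ψ z - χ z * ψ x) by
        rw [map_add, map_add]; ring, map_add]
    have h3 : ∀ x : A, lam x x = 0 := by
      intro x
      simp [hlam]
    have hval := hbAdm lam h1 h2 h3
    have hχa : χ a = 0 := hχ0 a (AddSubgroup.mem_sup_left (AddSubgroup.mem_zmultiples a))
    rw [hlam] at hval
    simp only [hχa, zero_mul, zero_sub] at hval
    have hprod : χ b * ψ a = 0 := by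
      have h4 := iotaQ_eq_zero (k := -(χ b * ψ a)) hval
      simpa [neg_eq_zero] using h4
    haveI : Fact ℓ.Prime := ⟨hℓ⟩
    rcases mul_eq_zero.mp hprod with h | h
    · exact hχb h
    · exact hψa h
  · rintro ⟨n, v, rfl⟩
    intro lam h1 h2 h3
    set f : A →+ AddCircle (1 : ℚ) := AddMonoidHom.mk' (lam a) (fun y z => h2 a y z) with hf
    set g : A →+ AddCircle (1 : ℚ) := AddMonoidHom.mk' (fun x => lam x v)
      (fun y z => h1 y z v) with hg
    have key : lam a (n • a + ℓ • v) = n • lam a a + lam (ℓ • a) v := by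
      have e1 : lam a (n • a + ℓ • v) = lam a (n • a) + lam a (ℓ • v) := h2 a _ _
      have e2 : lam a (n • a) = n • lam a a := by
        have := map_zsmul f n a
        simpa [hf] using this
      have e3 : lam a (ℓ • v) = ℓ • (lam a v) := by
        have := map_nsmul f ℓ v
        simpa [hf] using this
      have e4 : lam (ℓ • a) v = ℓ • (lam a v) := by
        have := map_nsmul g ℓ a
        simpa [hg] using this
      rw [e1, e2, e3, ← e4]
    rw [key, ha, h3 a]
    have h0 : lam 0 v = 0 := by
      have := map_zero g
      simpa [hg] using this
    simp [h0]

/-- The image of `Adm a` in `A/A[ℓ]` is the image of `ℓA`, hence independent of `a`. -/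
lemma image_adm (ℓ : ℕ) (hℓ : ℓ.Prime) (a : A) (ha : ℓ • a = 0)
    (haP : ¬ ∃ x : A, a = ℓ • x) :
    (QuotientAddGroup.mk' (torsionSub (A := A) ℓ)) '' Adm a
      = (QuotientAddGroup.mk' (torsionSub (A := A) ℓ)) '' {x : A | ∃ v : A, x = ℓ • v} := by
  have hmk_a : QuotientAddGroup.mk' (torsionSub (A := A) ℓ) a = 0 :=
    (QuotientAddGroup.eq_zero_iff a).mpr ha
  rw [adm_eq ℓ hℓ a ha haP]
  ext q
  constructor
  · rintro ⟨b, ⟨n, v, rfl⟩, rfl⟩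
    refine ⟨ℓ • v, ⟨v, rfl⟩, ?_⟩
    simp only [map_add, map_zsmul, hmk_a, smul_zero, zero_add]
  · rintro ⟨x, ⟨v, rfl⟩, rfl⟩
    exact ⟨ℓ • v, ⟨0, v, by simp⟩, rfl⟩

end aux2

/-- for `a, a' ∈ A[ℓ] \ ℓA`, the images of `Adm(a)` and `Adm(a')`
under the quotient map `A → A/A[ℓ]` have the same cardinality. -/
theorem stmt_8 {A : Type*} [AddCommGroup A] [Fintype A] (ℓ : ℕ) (hℓ : ℓ.Prime)
    (a a' : A) (ha : ℓ • a = 0) (ha' : ℓ • a' = 0)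
    (haP : ¬ ∃ x : A, a = ℓ • x) (ha'P : ¬ ∃ x : A, a' = ℓ • x) :
    ((QuotientAddGroup.mk' (torsionSub (A := A) ℓ)) '' Adm a).ncard
      = ((QuotientAddGroup.mk' (torsionSub (A := A) ℓ)) '' Adm a').ncard := by
  rw [image_adm ℓ hℓ a ha haP, image_adm ℓ hℓ a' ha' ha'P]
end
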